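/- Let k ≥ 2 be an even integer and ℓ ≥ 3 an odd integer. There is no rational number α with α^n = (k+1)(ℓ-1)B_k/(ℓ^{k+1}-1) for any integer n ≥ 2 dividing k, where B_k is the k-th Bernoulli number. -/

import Mathlib

open Finset

private lemma pn_nat' {m : ℕ} (hm : m ≠ 0) :
    padicNorm 2 (m : ℚ) = (2:ℚ) ^ (-(padicValNat 2 m : ℤ)) := by
  rw [padicNorm.eq_zpow_of_nonzero (by exact_mod_cast hm), padicValRat.of_nat]
  norm_num

private lemma pn_two_pow (m : ℕ) : padicNorm 2 ((2:ℚ)^m) = (2:ℚ) ^ (-(m:ℤ)) := by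
  induction m with
  | zero => simp
  | succ m ih =>
      rw [pow_succ, padicNorm.mul, ih]
      have h2 : padicNorm 2 (2:ℚ) = (2:ℚ)^(-1:ℤ) := by
        have := padicNorm.padicNorm_p (p := 2) (by norm_num)
        norm_num at this ⊢
        rw [this]
      rw [h2, ← zpow_add₀ (by norm_num : (2:ℚ) ≠ 0)]
      congr 1
      push_cast
      ring

private lemma pn_nat_odd {m : ℕ} (hm : Odd m) : padicNorm 2 (m : ℚ) = 1 := by
  rw [padicNorm.nat_eq_one_iff]
  rw [Nat.odd_iff] at hm
  omega

private lemma pn_pow (q : ℚ) (n : ℕ) : padicNorm 2 (q ^ n) = padicNorm 2 q ^ n := by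
  induction n with
  | zero => simp
  | succ n ih => rw [pow_succ, padicNorm.mul, ih, pow_succ]

private lemma pn_aux1 {m : ℕ} (hm : 1 ≤ m) : padicNorm 2 ((2:ℚ)^m / m) ≤ 1/2 := by
  have hv : padicValNat 2 m + 1 ≤ m := by
    have h1 : 2 ^ padicValNat 2 m ∣ m := pow_padicValNat_dvd
    have h2 : 2 ^ padicValNat 2 m ≤ m := Nat.le_of_dvd (by omega) h1
    have h3 : padicValNat 2 m < 2 ^ padicValNat 2 m := Nat.lt_two_pow_self
    omega
  rw [padicNorm.div, pn_two_pow, pn_nat' (by omega), ← zpow_sub₀ (by norm_num : (2:ℚ) ≠ 0)]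
  calc (2:ℚ) ^ (-(m:ℤ) - -(padicValNat 2 m : ℤ)) ≤ (2:ℚ) ^ (-1 : ℤ) := by
        apply zpow_le_zpow_right₀ (by norm_num)
        omega
    _ = 1/2 := by norm_num

private lemma pn_aux2 {m : ℕ} (hm : Odd m) :
    padicNorm 2 ((2:ℚ)^m / m) = (2:ℚ) ^ (-(m:ℤ)) := by
  rw [padicNorm.div, pn_two_pow, pn_nat_odd hm, div_one]

private lemma choose_id (j i : ℕ) : (j+1) * j.choose i = (j+1).choose i * (j+1-i) := by
  rw [← Nat.choose_succ_right_eq, ← Nat.add_one_mul_choose_eq]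

private lemma term_rw {j i : ℕ} (hij : i < j) :
    (bernoulli i) * (((j+1).choose i : ℚ)) * 2^(j+1-i) / (j+1) =
      bernoulli i * ((j.choose i : ℚ)) * ((2:ℚ)^(j+1-i) / ((j+1-i : ℕ) : ℚ)) := by
  have h := choose_id j i
  have hne : ((j+1-i : ℕ) : ℚ) ≠ 0 := by
    have : 0 < j + 1 - i := by omega
    exact_mod_cast this.ne'
  have hne2 : ((j:ℚ) + 1) ≠ 0 := by positivity
  have hdiv : (((j+1).choose i : ℚ)) / ((j:ℚ)+1) = (j.choose i : ℚ) / ((j+1-i : ℕ) : ℚ) := by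
    rw [div_eq_div_iff hne2 hne]
    have : (j+1).choose i * (j+1-i) = j.choose i * (j+1) := h.symm.trans (Nat.mul_comm _ _)
    exact_mod_cast congrArg (Nat.cast : ℕ → ℚ) this
  calc (bernoulli i) * (((j+1).choose i : ℚ)) * 2^(j+1-i) / ((j:ℚ)+1)
      = bernoulli i * 2^(j+1-i) * ((((j+1).choose i : ℚ)) / ((j:ℚ)+1)) := by ring
    _ = bernoulli i * 2^(j+1-i) * ((j.choose i : ℚ) / ((j+1-i : ℕ) : ℚ)) := by rw [hdiv]
    _ = bernoulli i * ((j.choose i : ℚ)) * ((2:ℚ)^(j+1-i) / ((j+1-i : ℕ) : ℚ)) := by ring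

private lemma bern_rec {j : ℕ} (hj : 1 ≤ j) :
    (2:ℚ) * bernoulli j =
      1 - ∑ i ∈ range j, bernoulli i * (((j+1).choose i : ℚ)) * 2^(j+1-i) / ((j:ℚ)+1) := by
  have h := sum_range_pow 2 j
  rw [sum_range_succ, sum_range_one] at h
  push_cast at h
  rw [zero_pow (by omega : j ≠ 0)] at h
  norm_num at h
  rw [sum_range_succ] at h
  have hj1 : j + 1 - j = 1 := by omega
  rw [hj1] at h
  have hc : (((j+1).choose j : ℕ) : ℚ) = (j:ℚ) + 1 := by
    rw [Nat.choose_succ_self_right]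
    push_cast; ring
  rw [hc] at h
  have hne2 : ((j:ℚ) + 1) ≠ 0 := by positivity
  have hlast : bernoulli j * ((j:ℚ) + 1) * 2 ^ 1 / ((j:ℚ) + 1) = 2 * bernoulli j := by
    field_simp
  rw [hlast] at h
  linarith

private lemma normB : ∀ j : ℕ, padicNorm 2 (bernoulli j) ≤ 2 := by
  intro j
  induction j using Nat.strong_induction_on with
  | _ j ih =>
    match j, ih with
    | 0, _ => simp [bernoulli_zero, padicNorm.one]
    | (j+1), ih =>
      have hj : 1 ≤ j + 1 := by omega
      have hrec := bern_rec hj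
      -- bound the sum
      have hsum : padicNorm 2 (∑ i ∈ range (j+1),
          bernoulli i * (((j+1+1).choose i : ℚ)) * 2^(j+1+1-i) / (((j+1:ℕ):ℚ)+1)) ≤ 1 := by
        apply padicNorm.sum_le (nonempty_range_iff.mpr (by omega))
        intro i hi
        rw [mem_range] at hi
        rw [term_rw (j := j+1) (i := i) hi]
        rw [padicNorm.mul, padicNorm.mul]
        have hb := ih i (by omega)
        have hc : padicNorm 2 (((j+1).choose i : ℕ) : ℚ) ≤ 1 := padicNorm.of_nat _
        have ha : padicNorm 2 ((2:ℚ)^((j+1)+1-i) / (((j+1)+1-i : ℕ) : ℚ)) ≤ 1/2 :=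
          pn_aux1 (by omega)
        have hnn1 : (0:ℚ) ≤ padicNorm 2 (bernoulli i) := padicNorm.nonneg _
        have hnn2 : (0:ℚ) ≤ padicNorm 2 (((j+1).choose i : ℕ) : ℚ) := padicNorm.nonneg _
        have hnn3 : (0:ℚ) ≤ padicNorm 2 ((2:ℚ)^((j+1)+1-i) / (((j+1)+1-i : ℕ) : ℚ)) :=
          padicNorm.nonneg _
        calc padicNorm 2 (bernoulli i) * padicNorm 2 (((j+1).choose i : ℕ) : ℚ) *
              padicNorm 2 ((2:ℚ)^((j+1)+1-i) / (((j+1)+1-i : ℕ) : ℚ))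
            ≤ 2 * 1 * (1/2) := by
              apply mul_le_mul (mul_le_mul hb hc hnn2 (by norm_num)) ha hnn3 (by norm_num)
          _ = 1 := by norm_num
      -- combine
      have h2 : padicNorm 2 ((2:ℚ) * bernoulli (j+1)) ≤ 1 := by
        rw [hrec]
        refine le_trans (padicNorm.sub) ?_
        rw [padicNorm.one]
        exact max_le le_rfl hsum
      have h3 : padicNorm 2 ((2:ℚ) * bernoulli (j+1)) =
          (1/2) * padicNorm 2 (bernoulli (j+1)) := by
        rw [padicNorm.mul]
        congr 1
        have h4 := pn_two_pow 1
        rw [pow_one] at h4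
        rw [h4]
        norm_num
      rw [h3] at h2
      linarith

private lemma bernoulli_odd_zero {n : ℕ} (h : Odd n) (h1 : 1 < n) : bernoulli n = 0 := by
  simp [bernoulli, bernoulli'_eq_zero_of_odd h h1]

private lemma normB_even {k : ℕ} (hk : 2 ≤ k) (hke : Even k) :
    padicNorm 2 (bernoulli k) = 2 := by
  have hrec := bern_rec (show 1 ≤ k by omega)
  set S := ∑ i ∈ range k, bernoulli i * (((k+1).choose i : ℚ)) * 2^(k+1-i) / ((k:ℚ)+1) with hS
  have hsum : padicNorm 2 S ≤ 1/2 := by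
    apply padicNorm.sum_le (nonempty_range_iff.mpr (by omega))
    intro i hi
    rw [mem_range] at hi
    rcases Nat.eq_zero_or_pos i with rfl | hi0
    · -- i = 0
      rw [term_rw hi, padicNorm.mul, padicNorm.mul]
      have h0 : padicNorm 2 (bernoulli 0) = 1 := by simp [bernoulli_zero, padicNorm.one]
      have hc : padicNorm 2 ((k.choose 0 : ℕ) : ℚ) = 1 := by simp [padicNorm.one]
      rw [h0, hc]
      simpa using pn_aux1 (show 1 ≤ k + 1 - 0 by omega)
    rcases eq_or_lt_of_le (Nat.succ_le_of_lt hi0) with hi1 | hi2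
    · -- i = 1
      obtain rfl : i = 1 := by omega
      rw [term_rw hi]
      have hkq : ((k:ℚ)) ≠ 0 := by positivity
      have hval : bernoulli 1 * ((k.choose 1 : ℕ) : ℚ) * ((2:ℚ)^(k+1-1) / ((k+1-1:ℕ):ℚ)) =
          -(2:ℚ)^(k-1) := by
        rw [bernoulli_one, Nat.choose_one_right, show k+1-1 = k from by omega]
        have h2k : (2:ℚ)^k = 2^(k-1) * 2 := by
          rw [← pow_succ]
          congr 1
          omega
        field_simp
        rw [h2k]
        ring
      rw [hval, padicNorm.neg, pn_two_pow]
      calc (2:ℚ) ^ (-((k-1 : ℕ):ℤ)) ≤ (2:ℚ) ^ (-1:ℤ) := by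
            apply zpow_le_zpow_right₀ (by norm_num)
            omega
        _ = 1/2 := by norm_num
    rcases Nat.even_or_odd i with hie | hio
    · -- i even, 2 ≤ i
      have him : Odd (k + 1 - i) := by
        rcases hke with ⟨a, ha⟩; rcases hie with ⟨b, hb⟩
        refine ⟨a - b, by omega⟩
      have him3 : 3 ≤ k + 1 - i := by
        rcases hke with ⟨a, ha⟩; rcases hie with ⟨b, hb⟩
        omega
      rw [term_rw hi, padicNorm.mul, padicNorm.mul, pn_aux2 him]
      have hb := normB i
      have hc : padicNorm 2 ((k.choose i : ℕ) : ℚ) ≤ 1 := padicNorm.of_nat _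
      have hzz : (2:ℚ) ^ (-((k+1-i : ℕ):ℤ)) ≤ (2:ℚ)^(-3:ℤ) := by
        apply zpow_le_zpow_right₀ (by norm_num)
        omega
      have hnn2 : (0:ℚ) ≤ padicNorm 2 ((k.choose i : ℕ) : ℚ) := padicNorm.nonneg _
      have hnn1 : (0:ℚ) ≤ padicNorm 2 (bernoulli i) := padicNorm.nonneg _
      have hzz0 : (0:ℚ) ≤ (2:ℚ) ^ (-((k+1-i : ℕ):ℤ)) := by positivity
      calc padicNorm 2 (bernoulli i) * padicNorm 2 ((k.choose i : ℕ) : ℚ) *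
            (2:ℚ) ^ (-((k+1-i : ℕ):ℤ))
          ≤ 2 * 1 * (2:ℚ)^(-3:ℤ) := by
            apply mul_le_mul (mul_le_mul hb hc hnn2 (by norm_num)) hzz hzz0 (by norm_num)
        _ ≤ 1/2 := by norm_num
    · -- i odd, 3 ≤ i
      have : bernoulli i = 0 := bernoulli_odd_zero hio (by omega)
      rw [this]
      simp [padicNorm.zero]
  have hone : padicNorm 2 (1 - S) = 1 := by
    have hne : padicNorm 2 (1:ℚ) ≠ padicNorm 2 (-S) := by
      rw [padicNorm.one, padicNorm.neg]
      intro h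
      rw [← h] at hsum
      norm_num at hsum
    have := padicNorm.add_eq_max_of_ne (p := 2) hne
    rw [padicNorm.one, padicNorm.neg] at this
    have hmax : max 1 (padicNorm 2 S) = 1 := by
      apply max_eq_left
      linarith
    rw [sub_eq_add_neg, this, hmax]
  have h3 : padicNorm 2 ((2:ℚ) * bernoulli k) = (1/2) * padicNorm 2 (bernoulli k) := by
    rw [padicNorm.mul]
    have h4 := pn_two_pow 1
    rw [pow_one] at h4
    rw [h4]
    norm_num
  rw [hrec, hone] at h3
  linarith

theorem stmt_16 (k ℓ : ℕ) (hk : 2 ≤ k) (hke : Even k) (hℓ : 3 ≤ ℓ) (hℓo : Odd ℓ) :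
    ¬ ∃ (α : ℚ) (n : ℕ), 2 ≤ n ∧ n ∣ k ∧
      α ^ n = ((k : ℚ) + 1) * ((ℓ : ℚ) - 1) * bernoulli k / ((ℓ : ℚ) ^ (k + 1) - 1) := by
  rintro ⟨α, n, hn2, -, heq⟩
  -- norms of the pieces
  have hk1 : padicNorm 2 ((k:ℚ) + 1) = 1 := by
    have : ((k:ℚ) + 1) = ((k+1 : ℕ) : ℚ) := by push_cast; ring
    rw [this, pn_nat_odd]
    rcases hke with ⟨a, ha⟩
    exact ⟨a, by omega⟩
  have hl1 : ((ℓ:ℚ) - 1) ≠ 0 := by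
    have : (3:ℚ) ≤ (ℓ:ℚ) := by exact_mod_cast hℓ
    intro h
    nlinarith
  have hLnorm : padicNorm 2 ((ℓ:ℚ) - 1) ≠ 0 := padicNorm.nonzero hl1
  -- geometric sum
  have hgeom : (ℓ:ℚ)^(k+1) - 1 = ((ℓ:ℚ) - 1) * ∑ i ∈ range (k+1), (ℓ:ℚ)^i := by
    rw [mul_comm]
    exact (geom_sum_mul (ℓ:ℚ) (k+1)).symm
  have hSodd : Odd (∑ i ∈ range (k+1), ℓ^i) := by
    rw [Nat.odd_iff, Finset.sum_nat_mod]
    have h1 : ∀ i ∈ range (k+1), ℓ^i % 2 = 1 := fun i _ => Nat.odd_iff.mp (hℓo.pow)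
    rw [Finset.sum_congr rfl h1, Finset.sum_const, smul_eq_mul, mul_one, Finset.card_range]
    rw [Nat.even_iff] at hke
    omega
  have hSnorm : padicNorm 2 (∑ i ∈ range (k+1), (ℓ:ℚ)^i) = 1 := by
    have hc : (∑ i ∈ range (k+1), (ℓ:ℚ)^i) = ((∑ i ∈ range (k+1), ℓ^i : ℕ) : ℚ) := by
      push_cast
      rfl
    rw [hc, pn_nat_odd hSodd]
  have hBnorm := normB_even hk hke
  -- norm of rhs
  have hr : padicNorm 2 (((k : ℚ) + 1) * ((ℓ : ℚ) - 1) * bernoulli k /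
      ((ℓ : ℚ) ^ (k + 1) - 1)) = 2 := by
    rw [hgeom, padicNorm.div, padicNorm.mul, padicNorm.mul, padicNorm.mul,
      hk1, hSnorm, hBnorm, mul_one]
    rw [one_mul]
    field_simp
  -- conclude
  rw [← heq] at hr
  have hα : α ≠ 0 := by
    intro h
    rw [h, zero_pow (by omega : n ≠ 0), padicNorm.zero] at hr
    norm_num at hr
  obtain ⟨z, hz⟩ := padicNorm.values_discrete (p := 2) hα
  rw [pn_pow, hz] at hr
  have hz2 : ((2:ℕ):ℚ) = (2:ℚ) := by norm_num
  rw [hz2] at hr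
  rw [← zpow_natCast ((2:ℚ)^(-z)), ← zpow_mul] at hr
  have hr2 : (2:ℚ)^(-z*(n:ℤ)) = (2:ℚ)^(1:ℤ) := by rw [hr]; norm_num
  have := zpow_right_injective₀ (by norm_num : (0:ℚ) < 2) (by norm_num : (2:ℚ) ≠ 1) hr2
  have hdvd : (n:ℤ) ∣ 1 := ⟨-z, by linarith [this]⟩
  have := Int.le_of_dvd one_pos hdvd
  omega
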